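/- If two term nodes ⟨t₁, p₁⟩ and ⟨t₂, p₂⟩ are bisimilar, then free(t₁[p₁]) = free(t₂[p₂]). -/
import Mathlib


namespace HashAlpha

/-- g-terms: λ-terms with de Bruijn indices, extended with global variables `gvar t`. -/
inductive GTerm : Type
  | var : ℕ → GTerm
  | app : GTerm → GTerm → GTerm
  | lam : GTerm → GTerm
  | gvar : GTerm → GTerm
  deriving DecidableEq

/-- A g-term is a pure λ-term if it contains no global variables. -/
def GTerm.IsPure : GTerm → Prop
  | .var _ => True
  | .app a b => a.IsPure ∧ b.IsPure
  | .lam a => a.IsPure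
  | .gvar _ => False

/-- Directions for term positions: ↓, ↙, ↘. -/
inductive Dir : Type
  | down | left | right
  deriving DecidableEq

/-- A term position is a word over {↓, ↙, ↘}. -/
abbrev Pos := List Dir

/-- `|p|_λ`: the number of ↓'s in a position. -/
def lamDepth (p : Pos) : ℕ := p.count Dir.down

/-- Term indexing `t[p]` (partial; does not descend into global variables). -/
def GTerm.index : GTerm → Pos → Option GTerm
  | t, [] => some t
  | .app a _, .left :: p => a.index p
  | .app _ b, .right :: p => b.index p
  | .lam a, .down :: p => a.index p
  | _, _ => none

/-- `valid(t)`: the set of positions where `t[p]` is defined. -/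
def Valid (t : GTerm) : Set Pos := {p | (t.index p).isSome}

/-- `vars(t)`: positions of variables. -/
def Vars (t : GTerm) : Set Pos := {p | ∃ i, t.index p = some (.var i)}

/-- `free(t)`: positions of free variables. -/
def Free (t : GTerm) : Set Pos :=
  {p | ∃ i, t.index p = some (.var i) ∧ lamDepth p ≤ i}

/-- A term is closed if it has no free variables. -/
def Closed (t : GTerm) : Prop := Free t = ∅

/-- `p` is locally closed in `t`: every free variable of `t[p]` is also free in `t`. -/
def LocallyClosed (t : GTerm) (p : Pos) : Prop :=
  p ∈ Valid t ∧ ∀ u, t.index p = some u → ∀ q ∈ Free u, p ++ q ∈ Free t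

/-- Subtract `d0` from every free variable (`d` is the current binder depth). -/
def declift (d0 : ℕ) : GTerm → ℕ → GTerm
  | .var j, d => if d ≤ j then .var (j - d0) else .var j
  | .app a b, d => .app (declift d0 a d) (declift d0 b d)
  | .lam a, d => .lam (declift d0 a (d + 1))
  | .gvar a, _ => .gvar a

/-- The lift `⟨t⟩p`: equal to `t[p]` except every free variable of `t[p]` is
decremented by `|p|_λ`. -/
def liftAt (t : GTerm) (p : Pos) : Option GTerm :=
  (t.index p).map (fun u => declift (lamDepth p) u 0)

/-- Transition labels: ↓, ↙, ↘ and ↑. -/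
inductive Lab : Type
  | down | left | right | up
  deriving DecidableEq

def Lab.ofDir : Dir → Lab
  | .down => .down
  | .left => .left
  | .right => .right

/-- Transitions between term nodes. -/
inductive Trans : GTerm × Pos → Lab → GTerm × Pos → Prop
  | dir (t : GTerm) (p : Pos) (x : Dir) :
      (p ++ [x]) ∈ Valid t → Trans (t, p) (Lab.ofDir x) (t, p ++ [x])
  | up (t : GTerm) (q r : Pos) :
      t.index (q ++ Dir.down :: r) = some (.var (lamDepth r)) →
      Trans (t, q ++ Dir.down :: r) Lab.up (t, q)

/-- `R` is a bisimulation. -/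
def IsBisim (R : GTerm × Pos → GTerm × Pos → Prop) : Prop :=
  ∀ n₁ n₂, R n₁ n₂ → ∀ x : Lab,
    (∀ n₁', Trans n₁ x n₁' → ∃ n₂', Trans n₂ x n₂' ∧ R n₁' n₂') ∧
    (∀ n₂', Trans n₂ x n₂' → ∃ n₁', Trans n₁ x n₁' ∧ R n₁' n₂')

/-- Two nodes are bisimilar when some bisimulation relates them. -/
def Bisim (n₁ n₂ : GTerm × Pos) : Prop := ∃ R, IsBisim R ∧ R n₁ n₂

/-- `(t, p)` is a term node: `t` is closed and `p ∈ valid(t)`. -/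
def IsNode (t : GTerm) (p : Pos) : Prop := Closed t ∧ p ∈ Valid t

/-- A single fork between term nodes (let-abs rule or closed rule). -/
def SingleFork (n₁ n₂ : GTerm × Pos) : Prop :=
  (∃ t p q₁ q₂ r u,
      n₁ = (t, p ++ q₁ ++ r) ∧ n₂ = (t, p ++ q₂ ++ r) ∧
      IsNode t (p ++ q₁ ++ r) ∧ IsNode t (p ++ q₂ ++ r) ∧
      t.index p = some u ∧ LocallyClosed u q₁ ∧ liftAt u q₁ = liftAt u q₂) ∨
  (∃ t₁ t₂ p₁ p₂ r u,
      n₁ = (t₁, p₁ ++ r) ∧ n₂ = (t₂, p₂ ++ r) ∧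
      IsNode t₁ (p₁ ++ r) ∧ IsNode t₂ (p₂ ++ r) ∧
      t₁.index p₁ = some u ∧ Closed u ∧ t₂.index p₂ = some u)

/-- Fork equivalence: the transitive closure of single forks. -/
def ForkEquiv : GTerm × Pos → GTerm × Pos → Prop := Relation.TransGen SingleFork

/-- Shift free variables ≥ `c` up by `d`. -/
def shiftAux (c d : ℕ) : GTerm → GTerm
  | .var j => if j < c then .var j else .var (j + d)
  | .app a b => .app (shiftAux c d a) (shiftAux c d b)
  | .lam a => .lam (shiftAux (c + 1) d a)
  | .gvar a => .gvar a

/-- Capture-avoiding substitution of free variable `i` by `u` (at current depth `d`). -/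
def substAux (i : ℕ) (u : GTerm) : ℕ → GTerm → GTerm
  | d, .var j => if j = i + d then shiftAux 0 d u else .var j
  | d, .app a b => .app (substAux i u d a) (substAux i u d b)
  | d, .lam a => .lam (substAux i u (d + 1) a)
  | _, .gvar a => .gvar a

/-- `t[i := u]`: capture-avoiding substitution of variable `i` by `u` in `t`. -/
def subst (i : ℕ) (u : GTerm) (t : GTerm) : GTerm := substAux i u 0 t

/-- Simultaneous capture-avoiding substitution of variable `i` by `σᵢ`
(at current depth `d`). -/
def msubstAux (σ : List GTerm) : ℕ → GTerm → GTerm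
  | d, .var j =>
      if j < d then .var j else shiftAux 0 d (σ.getD (j - d) (.var (j - d)))
  | d, .app a b => .app (msubstAux σ d a) (msubstAux σ d b)
  | d, .lam a => .lam (msubstAux σ (d + 1) a)
  | _, .gvar a => .gvar a

/-- `tσ`: simultaneous substitution of each variable `i` by the `i`-th element of `σ`. -/
def msubst (σ : List GTerm) (t : GTerm) : GTerm := msubstAux σ 0 t

/-- Term size (the term summary `|t|`); global variables count as leaves. -/
def gsize : GTerm → ℕ
  | .var _ => 1
  | .gvar _ => 1
  | .app a b => gsize a + gsize b + 1
  | .lam a => gsize a + 1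

theorem gsize_shiftAux (c d : ℕ) (t : GTerm) : gsize (shiftAux c d t) = gsize t := by
  induction t generalizing c with
  | var j => simp only [shiftAux]; split <;> rfl
  | app a b iha ihb => simp [shiftAux, gsize, iha, ihb]
  | lam a ih => simp [shiftAux, gsize, ih]
  | gvar a => rfl

theorem gsize_substAux_gvar (i : ℕ) (w : GTerm) (d : ℕ) (t : GTerm) :
    gsize (substAux i (.gvar w) d t) = gsize t := by
  induction t generalizing d with
  | var j => simp only [substAux]; split <;> rfl
  | app a b iha ihb => simp [substAux, gsize, iha, ihb]
  | lam a ih => simp [substAux, gsize, ih]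
  | gvar a => rfl

theorem gsize_msubstAux (σ : List GTerm) (h : ∀ u ∈ σ, ∃ w, u = .gvar w)
    (d : ℕ) (t : GTerm) : gsize (msubstAux σ d t) = gsize t := by
  induction t generalizing d with
  | var j =>
    simp only [msubstAux]
    split
    · rfl
    · rw [gsize_shiftAux]
      rcases Nat.lt_or_ge (j - d) σ.length with hl | hl
      · rw [List.getD_eq_getElem _ _ hl]
        obtain ⟨w, hw⟩ := h _ (List.getElem_mem hl)
        rw [hw]; rfl
      · rw [List.getD_eq_default _ _ hl]; rfl
  | app a b iha ihb => simp [msubstAux, gsize, iha, ihb]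
  | lam a ih => simp [msubstAux, gsize, ih]
  | gvar a => rfl

theorem gsize_msubst (σ : List GTerm) (h : ∀ u ∈ σ, ∃ w, u = .gvar w)
    (t : GTerm) : gsize (msubst σ t) = gsize t :=
  gsize_msubstAux σ h 0 t

/-- The naive globalization procedure. -/
def globalizeNaive : GTerm → GTerm
  | .lam t => .lam (globalizeNaive (subst 0 (.gvar (.lam t)) t))
  | .app t u => .app (globalizeNaive t) (globalizeNaive u)
  | .gvar t => .gvar t
  | .var i => .var i
termination_by t => gsize t
decreasing_by
  · simp only [subst, gsize_substAux_gvar, gsize]; omega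
  · simp only [gsize]; omega
  · simp only [gsize]; omega

/-- The strongly connected component of a closed g-term: positions all of whose
nonempty prefixes index open terms. -/
def SCC (t : GTerm) : Set Pos :=
  {p | p ∈ Valid t ∧ ∀ p' u, p' ≠ [] → p' <+: p → t.index p' = some u → ¬ Closed u}

/-- `duplicates(t)`: strict subterms in the SCC of `t` whose term summary (size)
is not unique within the SCC. -/
def duplicates (t : GTerm) : Set GTerm :=
  {u | ∃ p q v, p ∈ SCC t ∧ q ∈ SCC t ∧ p ≠ [] ∧ q ≠ [] ∧ p ≠ q ∧
      t.index p = some u ∧ t.index q = some v ∧ gsize u = gsize v}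

open Classical in
mutual
/-- Efficient globalization. -/
noncomputable def globalize (r : GTerm) : GTerm :=
  globalizeScc r [] (by simp) r
termination_by (gsize r, 2)
decreasing_by
  apply Prod.Lex.right; omega

noncomputable def globalizeScc (r : GTerm) (σ : List GTerm)
    (h : ∀ u ∈ σ, ∃ w, u = GTerm.gvar w) : GTerm → GTerm
  | .lam t => .lam (globalizeStep r (.gvar (.app r t) :: σ)
      (by
        intro u hu
        rcases List.mem_cons.mp hu with h' | h'
        · exact ⟨_, h'⟩
        · exact h u h') t)
  | .app t u => .app (globalizeStep r σ h t) (globalizeStep r σ h u)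
  | .gvar t => .gvar t
  | .var i => msubst σ (.var i)
termination_by t => (gsize t, 1)
decreasing_by
  · apply Prod.Lex.left; simp only [gsize]; omega
  · apply Prod.Lex.left; simp only [gsize]; omega
  · apply Prod.Lex.left; simp only [gsize]; omega

noncomputable def globalizeStep (r : GTerm) (σ : List GTerm)
    (h : ∀ u ∈ σ, ∃ w, u = GTerm.gvar w) (t : GTerm) : GTerm :=
  if Closed t ∨ t ∈ duplicates r then globalize (msubst σ t)
  else globalizeScc r σ h t
termination_by (gsize t, 3)
decreasing_by
  · rw [gsize_msubst σ h]; apply Prod.Lex.right; omega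
  · apply Prod.Lex.right; omega
end

section Aux

theorem lamDepth_append (p q : Pos) : lamDepth (p ++ q) = lamDepth p + lamDepth q := by
  simp [lamDepth, List.count_append]

theorem lamDepth_down_cons (r : Pos) : lamDepth (Dir.down :: r) = lamDepth r + 1 := by
  simp [lamDepth, List.count_cons]

theorem GTerm.index_append (t : GTerm) (p q : Pos) :
    t.index (p ++ q) = (t.index p).bind (fun u => u.index q) := by
  induction p generalizing t with
  | nil => simp [GTerm.index]
  | cons x p ih => cases x <;> cases t <;> simp [GTerm.index, ih]

theorem isSome_index_prefix {t : GTerm} {p q : Pos}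
    (h : (t.index (p ++ q)).isSome) : (t.index p).isSome := by
  rw [GTerm.index_append] at h
  cases hp : t.index p with
  | none => rw [hp] at h; simp at h
  | some u => rfl

theorem gsize_eq_of_valid_ext : ∀ (u₁ u₂ : GTerm),
    (∀ q, (u₁.index q).isSome ↔ (u₂.index q).isSome) → gsize u₁ = gsize u₂
  | .var _, .var _, _ => rfl
  | .var _, .gvar _, _ => rfl
  | .gvar _, .var _, _ => rfl
  | .gvar _, .gvar _, _ => rfl
  | .var _, .app _ _, h => by simpa [GTerm.index] using (h [Dir.left]).mpr
  | .var _, .lam _, h => by simpa [GTerm.index] using (h [Dir.down]).mpr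
  | .gvar _, .app _ _, h => by simpa [GTerm.index] using (h [Dir.left]).mpr
  | .gvar _, .lam _, h => by simpa [GTerm.index] using (h [Dir.down]).mpr
  | .app _ _, .var _, h => by simpa [GTerm.index] using (h [Dir.left]).mp
  | .lam _, .var _, h => by simpa [GTerm.index] using (h [Dir.down]).mp
  | .app _ _, .gvar _, h => by simpa [GTerm.index] using (h [Dir.left]).mp
  | .lam _, .gvar _, h => by simpa [GTerm.index] using (h [Dir.down]).mp
  | .app _ _, .lam _, h => by simpa [GTerm.index] using (h [Dir.left]).mp
  | .lam _, .app _ _, h => by simpa [GTerm.index] using (h [Dir.down]).mp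
  | .app a b, .app c d, h => by
    have h1 := gsize_eq_of_valid_ext a c (fun q => by
      simpa [GTerm.index] using h (Dir.left :: q))
    have h2 := gsize_eq_of_valid_ext b d (fun q => by
      simpa [GTerm.index] using h (Dir.right :: q))
    simp [gsize, h1, h2]
  | .lam a, .lam c, h => by
    have h1 := gsize_eq_of_valid_ext a c (fun q => by
      simpa [GTerm.index] using h (Dir.down :: q))
    simp [gsize, h1]

theorem gsize_index_le {t u : GTerm} {q : Pos} (h : t.index q = some u) :
    gsize u ≤ gsize t := by
  induction q generalizing t with
  | nil => simp [GTerm.index] at h; subst h; exact le_refl _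
  | cons x q ih =>
    cases x <;> cases t <;> simp [GTerm.index] at h <;>
      first
      | (have := ih h; simp [gsize]; omega)

theorem gsize_index_lt {t u : GTerm} {q : Pos} (hq : q ≠ []) (h : t.index q = some u) :
    gsize u < gsize t := by
  cases q with
  | nil => exact absurd rfl hq
  | cons x q =>
    cases x <;> cases t <;> simp [GTerm.index] at h <;>
      first
      | (have := gsize_index_le h; simp [gsize]; omega)

theorem exists_split (p : Pos) (i : ℕ) (h : i < lamDepth p) :
    ∃ a r, p = a ++ Dir.down :: r ∧ lamDepth r = i := by
  induction p with
  | nil => simp [lamDepth] at h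
  | cons x p ih =>
    by_cases h' : i < lamDepth p
    · obtain ⟨a, r, h1, h2⟩ := ih h'
      exact ⟨x :: a, r, by simp [h1], h2⟩
    · cases x with
      | down =>
        refine ⟨[], p, rfl, ?_⟩
        rw [lamDepth_down_cons] at h
        omega
      | left => exact absurd (by simpa [lamDepth, List.count_cons] using h) h'
      | right => exact absurd (by simpa [lamDepth, List.count_cons] using h) h'

theorem suffix_cons_strict {q r : Pos} {x : Dir} (h : q <:+ x :: r) (hne : q ≠ x :: r) :
    q <:+ r := by
  obtain ⟨w, hw⟩ := h
  cases w with
  | nil => exact absurd (by simpa using hw) hne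
  | cons y w => exact ⟨w, by simpa using congrArg List.tail hw⟩

theorem Bisim.symm {n₁ n₂ : GTerm × Pos} (h : Bisim n₁ n₂) : Bisim n₂ n₁ := by
  obtain ⟨R, hR, hn⟩ := h
  exact ⟨fun a b => R b a, fun m₁ m₂ hm x => (hR m₂ m₁ hm x).symm, hn⟩

theorem Bisim.step {n₁ n₂ n₁' : GTerm × Pos} {x : Lab} (h : Bisim n₁ n₂)
    (ht : Trans n₁ x n₁') : ∃ n₂', Trans n₂ x n₂' ∧ Bisim n₁' n₂' := by
  obtain ⟨R, hR, hn⟩ := h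
  obtain ⟨n₂', ht', hr'⟩ := (hR n₁ n₂ hn x).1 n₁' ht
  exact ⟨n₂', ht', R, hR, hr'⟩

theorem trans_inv {n n' : GTerm × Pos} {l : Lab} (h : Trans n l n') :
    (∃ x, l = Lab.ofDir x ∧ n' = (n.1, n.2 ++ [x]) ∧ (n.2 ++ [x]) ∈ Valid n.1) ∨
    (∃ a r, l = Lab.up ∧ n.2 = a ++ Dir.down :: r ∧
      n.1.index n.2 = some (.var (lamDepth r)) ∧ n' = (n.1, a)) := by
  cases h with
  | dir t p y hv => exact Or.inl ⟨y, rfl, rfl, hv⟩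
  | up t q r hv => exact Or.inr ⟨q, r, rfl, rfl, hv, rfl⟩

theorem trans_dir_inv {n n' : GTerm × Pos} {x : Dir} (h : Trans n (Lab.ofDir x) n') :
    n' = (n.1, n.2 ++ [x]) ∧ (n.2 ++ [x]) ∈ Valid n.1 := by
  rcases trans_inv h with ⟨y, hy, h1, h2⟩ | ⟨a, r, hy, _⟩
  · have : x = y := by cases x <;> cases y <;> simp [Lab.ofDir] at hy ⊢
    subst this
    exact ⟨h1, h2⟩
  · cases x <;> simp [Lab.ofDir] at hy

theorem trans_up_inv {n n' : GTerm × Pos} (h : Trans n Lab.up n') :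
    ∃ a r, n.2 = a ++ Dir.down :: r ∧
      n.1.index n.2 = some (.var (lamDepth r)) ∧ n' = (n.1, a) := by
  rcases trans_inv h with ⟨y, hy, _, _⟩ | ⟨a, r, _, h1, h2, h3⟩
  · cases y <;> simp [Lab.ofDir] at hy
  · exact ⟨a, r, h1, h2, h3⟩

theorem bisim_extend {t₁ t₂ : GTerm} {p₁ p₂ : Pos} (hb : Bisim (t₁, p₁) (t₂, p₂))
    (q : Pos) (hv : (p₁ ++ q) ∈ Valid t₁) :
    Bisim (t₁, p₁ ++ q) (t₂, p₂ ++ q) ∧ (q ≠ [] → (p₂ ++ q) ∈ Valid t₂) := by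
  induction q generalizing p₁ p₂ with
  | nil => simpa using hb
  | cons x q ih =>
    have hv1 : (p₁ ++ [x]) ∈ Valid t₁ := by
      have he : p₁ ++ x :: q = (p₁ ++ [x]) ++ q := by simp
      rw [he] at hv
      exact isSome_index_prefix hv
    have ht : Trans (t₁, p₁) (Lab.ofDir x) (t₁, p₁ ++ [x]) := Trans.dir t₁ p₁ x hv1
    obtain ⟨n₂', ht', hb'⟩ := hb.step ht
    obtain ⟨hn', hv'⟩ := trans_dir_inv ht'
    subst hn'
    have hv2 : ((p₁ ++ [x]) ++ q) ∈ Valid t₁ := by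
      have he : p₁ ++ x :: q = (p₁ ++ [x]) ++ q := by simp
      rwa [he] at hv
    obtain ⟨h1, h2⟩ := ih hb' hv2
    refine ⟨by simpa using h1, fun _ => ?_⟩
    cases q with
    | nil => simpa using hv'
    | cons y q =>
      have := h2 (by simp)
      simpa using this

end Aux

theorem bisim_valid_iff {t₁ t₂ : GTerm} {p₁ p₂ : Pos} (hb : Bisim (t₁, p₁) (t₂, p₂))
    (w : Pos) (hw : w ≠ []) : (p₁ ++ w) ∈ Valid t₁ ↔ (p₂ ++ w) ∈ Valid t₂ :=
  ⟨fun h => (bisim_extend hb w h).2 hw, fun h => (bisim_extend hb.symm w h).2 hw⟩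

theorem free_mono {t₁ t₂ : GTerm} {p₁ p₂ : Pos} (c₁ : Closed t₁)
    (hb : Bisim (t₁, p₁) (t₂, p₂)) {u₁ u₂ : GTerm}
    (hu₁ : t₁.index p₁ = some u₁) (hu₂ : t₂.index p₂ = some u₂) :
    Free u₁ ⊆ Free u₂ := by
  intro q hq
  obtain ⟨i₁, hqi, hle⟩ := hq
  have hidx1 : t₁.index (p₁ ++ q) = some (.var i₁) := by
    rw [GTerm.index_append, hu₁]; exact hqi
  have hvq : (p₁ ++ q) ∈ Valid t₁ := by simp [Valid, hidx1]
  obtain ⟨hbq, -⟩ := bisim_extend hb q hvq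
  have hlt : i₁ < lamDepth (p₁ ++ q) := by
    by_contra hc
    have hmem : (p₁ ++ q) ∈ Free t₁ := ⟨i₁, hidx1, le_of_not_gt hc⟩
    rw [Closed] at c₁
    rw [c₁] at hmem
    exact hmem
  obtain ⟨a₁, r₁, hsplit1, hr₁⟩ := exists_split _ _ hlt
  have ht1 : Trans (t₁, p₁ ++ q) Lab.up (t₁, a₁) := by
    have := Trans.up t₁ a₁ r₁ (by rw [← hsplit1, hidx1, hr₁])
    rwa [← hsplit1] at this
  obtain ⟨n₂', ht₂, hb'⟩ := hbq.step ht1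
  obtain ⟨a₂, r₂, hsplit2, hidx2, hn₂⟩ := trans_up_inv ht₂
  simp only at hsplit2 hidx2
  subst hn₂
  have hu2q : u₂.index q = some (.var (lamDepth r₂)) := by
    rw [GTerm.index_append, hu₂] at hidx2
    exact hidx2
  refine ⟨lamDepth r₂, hu2q, ?_⟩
  by_contra hc2
  push_neg at hc2
  -- side 1 decomposition: p₁ = a₁ ++ down :: s, r₁ = s ++ q
  have hqs : q <:+ p₁ ++ q := ⟨p₁, rfl⟩
  obtain ⟨s, hs⟩ : ∃ s, r₁ = s ++ q := by
    rcases List.suffix_or_suffix_of_suffix hqs ⟨a₁, hsplit1.symm⟩ with h | h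
    · by_cases heq : q = Dir.down :: r₁
      · exfalso
        rw [heq, lamDepth_down_cons, hr₁] at hle
        omega
      · obtain ⟨s, hs⟩ := suffix_cons_strict h heq
        exact ⟨s, hs.symm⟩
    · exfalso
      obtain ⟨w, hw⟩ := h
      rw [← hw, lamDepth_append, lamDepth_down_cons, hr₁] at hle
      omega
  have hp1 : p₁ = a₁ ++ Dir.down :: s := by
    apply List.append_cancel_right (bs := q)
    rw [hsplit1, hs]
    simp
  -- side 2 decomposition: q = q₂' ++ down :: r₂, a₂ = p₂ ++ q₂'
  obtain ⟨q₂', hq₂'⟩ : ∃ q₂', q = q₂' ++ Dir.down :: r₂ := by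
    have hqs2 : q <:+ p₂ ++ q := ⟨p₂, rfl⟩
    rcases List.suffix_or_suffix_of_suffix hqs2 ⟨a₂, hsplit2.symm⟩ with h | h
    · by_cases heq : q = Dir.down :: r₂
      · exact ⟨[], heq⟩
      · exfalso
        obtain ⟨s', hs'⟩ := suffix_cons_strict h heq
        rw [← hs', lamDepth_append] at hc2
        omega
    · obtain ⟨w, hw⟩ := h
      exact ⟨w, hw.symm⟩
  have ha2 : a₂ = p₂ ++ q₂' := by
    apply List.append_cancel_right (bs := Dir.down :: r₂)
    rw [← hsplit2, hq₂']
    simp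
  subst ha2
  -- subterms v, v'
  have hva : (t₁.index a₁).isSome := by
    have : (t₁.index (a₁ ++ Dir.down :: s)).isSome := by rw [← hp1, hu₁]; rfl
    exact isSome_index_prefix this
  obtain ⟨v, hv⟩ := Option.isSome_iff_exists.mp hva
  have hvb : (t₁.index (p₁ ++ q₂')).isSome := by
    apply isSome_index_prefix (q := Dir.down :: r₂)
    rw [List.append_assoc, ← hq₂']
    simp [hidx1]
  obtain ⟨v', hv'⟩ := Option.isSome_iff_exists.mp hvb
  have hvv' : v.index (Dir.down :: s ++ q₂') = some v' := by
    have : t₁.index (a₁ ++ (Dir.down :: s ++ q₂')) = some v' := by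
      rw [← List.append_assoc, ← hp1]
      exact hv'
    rw [GTerm.index_append, hv] at this
    exact this
  -- shape equality
  have hshape : ∀ w, (v.index w).isSome ↔ (v'.index w).isSome := by
    intro w
    by_cases hw : w = []
    · subst hw
      simp [GTerm.index]
    · have e1 : (v.index w).isSome ↔ (t₁.index (a₁ ++ w)).isSome := by
        rw [GTerm.index_append, hv]
        rfl
      have e2 : (t₁.index (a₁ ++ w)).isSome ↔ (t₂.index ((p₂ ++ q₂') ++ w)).isSome :=
        bisim_valid_iff hb' w hw
      have e3 : (t₂.index (p₂ ++ (q₂' ++ w))).isSome ↔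
          (t₁.index (p₁ ++ (q₂' ++ w))).isSome :=
        (bisim_valid_iff hb (q₂' ++ w) (by simp [hw])).symm
      have e4 : (v'.index w).isSome ↔ (t₁.index ((p₁ ++ q₂') ++ w)).isSome := by
        rw [GTerm.index_append, hv']
        rfl
      rw [e1, e2, e4, List.append_assoc p₂, List.append_assoc p₁]
      exact e3
  have hsize := gsize_eq_of_valid_ext v v' hshape
  have hlt' : gsize v' < gsize v := gsize_index_lt (by simp) hvv'
  omega

/-- bisimilar term nodes have subjects with equal sets of
free-variable positions. -/
theorem bisim_free_eq (t₁ t₂ : GTerm) (p₁ p₂ : Pos)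
    (h₁ : t₁.IsPure) (h₂ : t₂.IsPure)
    (n₁ : IsNode t₁ p₁) (n₂ : IsNode t₂ p₂)
    (hb : Bisim (t₁, p₁) (t₂, p₂)) :
    ∀ u₁ u₂, t₁.index p₁ = some u₁ → t₂.index p₂ = some u₂ →
      Free u₁ = Free u₂ := by
  intro u₁ u₂ hu₁ hu₂
  exact Set.Subset.antisymm (free_mono n₁.1 hb hu₁ hu₂) (free_mono n₂.1 hb.symm hu₂ hu₁)

end HashAlpha
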